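/- Let G be a game with no cycle of total weight zero, let F be a set of vertices containing N = N_G such that the supΣ^N-value is finite on F, let H be the subgame obtained by removing F from G (assumed to be a subgame), let φ_H be a reducing potential for H, and assume H^+ = ZP_{φ_H} is empty and H^- = ZN_{φ_H} is nonempty. Let m be the maximal value of w(vv') + supΣ^N-value(v') − φ_H(v) over edges vv' from H^- ∩ V_Max to F (such edges exist). Call an edge vv' a good escape if it goes from H^- to F and satisfies w(vv') + supΣ^N-value(v') − φ_H(v) ≥ m. Let S be the set of vertices of H^- from which, in G, Max has a strategy ensuring that the play visits only edges of φ_H-modified weight ≥ 0 while remaining in H^-, and either stays forever in H^- or exits via a good escape. Then for every vertex v ∈ S we have supΣ^N-value(v) = m + φ_H(v). -/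

import Mathlib

/-!
Basic definitions for mean-payoff games: games, infinite paths, positional
strategies, the valuations MP, supΣ^X and infΣ^X, values of vertices,
zones N, P, ZN, ZP (also relative to a sub-arena), reduced games,
potentials and potential reductions, traps.
-/

/-- A game: a sinkless directed graph with integer weights, whose vertices are
partitioned into Min-vertices (`IsMin`) and Max-vertices (`¬ IsMin`). -/
structure MPGame (V : Type*) where
  E : V → V → Prop
  w : V → V → ℤ
  IsMin : V → Prop
  sinkless : ∀ v, ∃ v', E v v'

namespace MPGame

variable {V : Type*}

/-- An infinite path in a game. -/
structure Path (G : MPGame V) where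
  vert : ℕ → V
  adj : ∀ i, G.E (vert i) (vert (i + 1))

/-- The sum of the weights of the first `k` edges of a path. -/
def Path.wsum {G : MPGame V} (π : G.Path) (k : ℕ) : ℤ :=
  ∑ i ∈ Finset.range k, G.w (π.vert i) (π.vert (i + 1))

/-- The tail of a path (drop the first vertex). -/
def Path.tail {G : MPGame V} (π : G.Path) : G.Path :=
  ⟨fun i => π.vert (i + 1), fun i => π.adj (i + 1)⟩

/-- A positional strategy `σ : V → V` is legal if it always follows an edge. -/
def Legal (G : MPGame V) (σ : V → V) : Prop := ∀ v, G.E v (σ v)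

/-- Consistency of a path with a positional Min-strategy. -/
def Path.ConsMin {G : MPGame V} (π : G.Path) (σ : V → V) : Prop :=
  ∀ i, G.IsMin (π.vert i) → π.vert (i + 1) = σ (π.vert i)

/-- Consistency of a path with a positional Max-strategy. -/
def Path.ConsMax {G : MPGame V} (π : G.Path) (τ : V → V) : Prop :=
  ∀ i, ¬ G.IsMin (π.vert i) → π.vert (i + 1) = τ (π.vert i)

/-- The mean-payoff valuation `MP(π) = limsup_k (1/k) ∑_{i<k} w_i`. -/
noncomputable def MP {G : MPGame V} (π : G.Path) : EReal :=
  Filter.limsup (fun k => (((π.wsum k : ℝ) / (k : ℝ)) : EReal)) Filter.atTop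

/-- `supΣ^X(π) = sup_{k ≤ n_X} ∑_{i<k} w_i`, where `n_X` is the first hitting
time of `X` (all `k` if `X` is never hit). -/
noncomputable def supSigma {G : MPGame V} (X : Set V) (π : G.Path) : EReal :=
  ⨆ k : {k : ℕ // ∀ i < k, π.vert i ∉ X}, ((π.wsum k.1 : ℝ) : EReal)

/-- `infΣ^X(π) = inf_{k ≤ n_X} ∑_{i<k} w_i`. -/
noncomputable def infSigma {G : MPGame V} (X : Set V) (π : G.Path) : EReal :=
  ⨅ k : {k : ℕ // ∀ i < k, π.vert i ∉ X}, ((π.wsum k.1 : ℝ) : EReal)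

/-- `inf_σ sup_{π ⊨ σ, π from v} val(π)`, over legal positional Min-strategies. -/
noncomputable def minVal (G : MPGame V) (val : G.Path → EReal) (v : V) : EReal :=
  ⨅ σ : {σ : V → V // G.Legal σ},
    ⨆ π : {π : G.Path // π.vert 0 = v ∧ π.ConsMin σ.1}, val π.1

/-- `sup_τ inf_{π ⊨ τ, π from v} val(π)`, over legal positional Max-strategies. -/
noncomputable def maxVal (G : MPGame V) (val : G.Path → EReal) (v : V) : EReal :=
  ⨆ τ : {τ : V → V // G.Legal τ},
    ⨅ π : {π : G.Path // π.vert 0 = v ∧ π.ConsMax τ.1}, val π.1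

/-- The MP-value of a vertex. -/
noncomputable def MPval (G : MPGame V) (v : V) : EReal := G.minVal MP v

/-- The `supΣ^X`-value of a vertex. -/
noncomputable def supSigmaVal (G : MPGame V) (X : Set V) (v : V) : EReal :=
  G.minVal (supSigma X) v

/-- The `infΣ^X`-value of a vertex. -/
noncomputable def infSigmaVal (G : MPGame V) (X : Set V) (v : V) : EReal :=
  G.minVal (infSigma X) v

/-- `G` has no cycle of total weight zero: no path repeats a vertex with the
same partial sum of weights. -/
def NoZeroCycle (G : MPGame V) : Prop :=
  ∀ (π : G.Path) (i j : ℕ), i < j → π.vert i = π.vert j → π.wsum i ≠ π.wsum j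

/-- The zone `N` of the subgame of `G` induced on `D`: vertices whose
immediately optimal edges (within `D`) have weight `< 0`. -/
def NsetOn (G : MPGame V) (D : Set V) : Set V :=
  {v | v ∈ D ∧ ((G.IsMin v ∧ ∃ v' ∈ D, G.E v v' ∧ G.w v v' < 0) ∨
      (¬ G.IsMin v ∧ ∀ v' ∈ D, G.E v v' → G.w v v' < 0))}

/-- The zone `P` of the subgame of `G` induced on `D`. -/
def PsetOn (G : MPGame V) (D : Set V) : Set V :=
  {v | v ∈ D ∧ ((¬ G.IsMin v ∧ ∃ v' ∈ D, G.E v v' ∧ 0 < G.w v v') ∨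
      (G.IsMin v ∧ ∀ v' ∈ D, G.E v v' → 0 < G.w v v'))}

/-- The zone `N` of `G`. -/
def Nset (G : MPGame V) : Set V := G.NsetOn Set.univ

/-- The zone `P` of `G`. -/
def Pset (G : MPGame V) : Set V := G.PsetOn Set.univ

/-- The zone `ZN` of the subgame of `G` induced on `D`: vertices from which
Min can force that an edge of weight `< 0` is visited before any edge of
weight `> 0` (staying within `D`). -/
inductive ZNr (G : MPGame V) (D : Set V) : V → Prop
  | minNeg (v v' : V) : v ∈ D → G.IsMin v → v' ∈ D → G.E v v' → G.w v v' < 0 →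
      ZNr G D v
  | minZero (v v' : V) : v ∈ D → G.IsMin v → v' ∈ D → G.E v v' → G.w v v' = 0 →
      ZNr G D v' → ZNr G D v
  | max (v : V) : v ∈ D → ¬ G.IsMin v →
      (∀ v' ∈ D, G.E v v' → G.w v v' ≤ 0) →
      (∀ v', v' ∈ D → G.E v v' → G.w v v' = 0 → ZNr G D v') →
      ZNr G D v

/-- The zone `ZP` of the subgame of `G` induced on `D`. -/
inductive ZPr (G : MPGame V) (D : Set V) : V → Prop
  | maxPos (v v' : V) : v ∈ D → ¬ G.IsMin v → v' ∈ D → G.E v v' → 0 < G.w v v' →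
      ZPr G D v
  | maxZero (v v' : V) : v ∈ D → ¬ G.IsMin v → v' ∈ D → G.E v v' → G.w v v' = 0 →
      ZPr G D v' → ZPr G D v
  | min (v : V) : v ∈ D → G.IsMin v →
      (∀ v' ∈ D, G.E v v' → 0 ≤ G.w v v') →
      (∀ v', v' ∈ D → G.E v v' → G.w v v' = 0 → ZPr G D v') →
      ZPr G D v

/-- The zone `ZN` of `G`. -/
def ZN (G : MPGame V) : V → Prop := G.ZNr Set.univ

/-- The zone `ZP` of `G`. -/
def ZP (G : MPGame V) : V → Prop := G.ZPr Set.univ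

/-- The subgame of `G` induced on `D` is reduced: from every vertex of `ZN`,
Min can force that the first edge visited has weight `≤ 0` and leads into
`ZN`, and symmetrically for `ZP` and Max. -/
def ReducedOn (G : MPGame V) (D : Set V) : Prop :=
  (∀ v, G.ZNr D v →
     (G.IsMin v → ∃ v' ∈ D, G.E v v' ∧ G.w v v' ≤ 0 ∧ G.ZNr D v') ∧
     (¬ G.IsMin v → ∀ v' ∈ D, G.E v v' → G.w v v' ≤ 0 ∧ G.ZNr D v')) ∧
  (∀ v, G.ZPr D v →
     (¬ G.IsMin v → ∃ v' ∈ D, G.E v v' ∧ 0 ≤ G.w v v' ∧ G.ZPr D v') ∧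
     (G.IsMin v → ∀ v' ∈ D, G.E v v' → 0 ≤ G.w v v' ∧ G.ZPr D v'))

/-- `G` is reduced. -/
def Reduced (G : MPGame V) : Prop := G.ReducedOn Set.univ

/-- The subgame of `G` induced on `D` is positively reduced: `ZN = ∅`. -/
def PosReducedOn (G : MPGame V) (D : Set V) : Prop := ∀ v, ¬ G.ZNr D v

/-- `A` is a trap for Min: a sinkless subgraph from which Min cannot escape. -/
def TrapForMin (G : MPGame V) (A : Set V) : Prop :=
  (∀ v ∈ A, ∃ v' ∈ A, G.E v v') ∧
  ∀ v ∈ A, G.IsMin v → ∀ v', G.E v v' → v' ∈ A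

/-- `A` is a trap for Max: a sinkless subgraph from which Max cannot escape. -/
def TrapForMax (G : MPGame V) (A : Set V) : Prop :=
  (∀ v ∈ A, ∃ v' ∈ A, G.E v v') ∧
  ∀ v ∈ A, ¬ G.IsMin v → ∀ v', G.E v v' → v' ∈ A

/-- The potential reduction of `G` by the potential `φ`. -/
def pot (G : MPGame V) (φ : V → ℤ) : MPGame V where
  E := G.E
  w := fun v v' => G.w v v' + φ v' - φ v
  IsMin := G.IsMin
  sinkless := G.sinkless

end MPGame

namespace MPGame

variable {V : Type*}

section Helpers

lemma add_iSup_le_of {ι : Sort*} {c : ℝ} {f : ι → EReal} {X : EReal}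
    (h : ∀ i, (c : EReal) + f i ≤ X) : (c : EReal) + (⨆ i, f i) ≤ X := by
  rcases isEmpty_or_nonempty ι with hι | hι
  · simp only [iSup_of_empty]
    rw [EReal.add_bot]
    exact bot_le
  · rw [add_comm, ← EReal.le_sub_iff_add_le (Or.inl (EReal.coe_ne_bot c))
      (Or.inl (EReal.coe_ne_top c))]
    exact iSup_le fun i => (EReal.le_sub_iff_add_le (Or.inl (EReal.coe_ne_bot c))
      (Or.inl (EReal.coe_ne_top c))).2 (by rw [add_comm]; exact h i)

lemma ecoe_le_ecoe {a b : ℤ} (h : a ≤ b) : ((a : ℝ) : EReal) ≤ ((b : ℝ) : EReal) := by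
  exact_mod_cast h

lemma ecoe_add (a b : ℤ) : (((a + b : ℤ) : ℝ) : EReal) = ((a : ℝ) : EReal) + ((b : ℝ) : EReal) := by
  norm_cast

end Helpers

section Paths

/-- Build a path by iterating a legal successor function. -/
def mkPath (G : MPGame V) (f : V → V) (hf : ∀ z, G.E z (f z)) (v : V) : G.Path :=
  ⟨fun n => f^[n] v, fun i => by
    show G.E (f^[i] v) (f^[i + 1] v)
    rw [Function.iterate_succ_apply']
    exact hf _⟩

@[simp] lemma mkPath_vert_zero (G : MPGame V) (f : V → V) (hf : ∀ z, G.E z (f z)) (v : V) :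
    (G.mkPath f hf v).vert 0 = v := rfl

lemma mkPath_vert_succ (G : MPGame V) (f : V → V) (hf : ∀ z, G.E z (f z)) (v : V) (n : ℕ) :
    (G.mkPath f hf v).vert (n + 1) = f ((G.mkPath f hf v).vert n) :=
  Function.iterate_succ_apply' f n v

/-- Prepend a vertex to a path. -/
def Path.cons {G : MPGame V} (u : V) (ρ : G.Path) (h : G.E u (ρ.vert 0)) : G.Path where
  vert n := Nat.rec u (fun k _ => ρ.vert k) n
  adj i := by
    cases i with
    | zero => exact h
    | succ k => exact ρ.adj k

@[simp] lemma Path.cons_vert_zero {G : MPGame V} (u : V) (ρ : G.Path) (h : G.E u (ρ.vert 0)) :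
    (Path.cons u ρ h).vert 0 = u := rfl

@[simp] lemma Path.cons_vert_succ {G : MPGame V} (u : V) (ρ : G.Path) (h : G.E u (ρ.vert 0))
    (n : ℕ) : (Path.cons u ρ h).vert (n + 1) = ρ.vert n := rfl

lemma Path.cons_wsum {G : MPGame V} (u : V) (ρ : G.Path) (h : G.E u (ρ.vert 0)) (k : ℕ) :
    (Path.cons u ρ h).wsum (k + 1) = G.w u (ρ.vert 0) + ρ.wsum k := by
  unfold Path.wsum
  rw [Finset.sum_range_succ']
  simp only [Path.cons_vert_succ, Path.cons_vert_zero]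
  rw [add_comm]

/-- Splice: follow `π` for `n` steps, then follow `ρ`. -/
def Path.splice {G : MPGame V} (π ρ : G.Path) (n : ℕ) (h : ρ.vert 0 = π.vert n) : G.Path where
  vert k := if k < n then π.vert k else ρ.vert (k - n)
  adj i := by
    show G.E (if i < n then π.vert i else ρ.vert (i - n))
      (if i + 1 < n then π.vert (i + 1) else ρ.vert (i + 1 - n))
    rcases lt_trichotomy (i + 1) n with h1 | h1 | h1
    · rw [if_pos (Nat.lt_of_succ_lt h1), if_pos h1]
      exact π.adj i
    · rw [if_pos (by omega), if_neg (by omega)]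
      have h2 : i + 1 - n = 0 := by omega
      rw [h2, h, ← h1]
      exact π.adj i
    · rw [if_neg (by omega), if_neg (by omega)]
      have h2 : i + 1 - n = (i - n) + 1 := by omega
      rw [h2]
      exact ρ.adj (i - n)

lemma Path.splice_vert_le {G : MPGame V} (π ρ : G.Path) (n : ℕ) (h : ρ.vert 0 = π.vert n)
    {k : ℕ} (hk : k ≤ n) : (Path.splice π ρ n h).vert k = π.vert k := by
  rcases lt_or_eq_of_le hk with hk | hk
  · exact if_pos hk
  · show (if k < n then π.vert k else ρ.vert (k - n)) = π.vert k
    rw [if_neg (by omega)]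
    subst hk
    simp [h]

lemma Path.splice_vert_ge {G : MPGame V} (π ρ : G.Path) (n : ℕ) (h : ρ.vert 0 = π.vert n)
    (k : ℕ) : (Path.splice π ρ n h).vert (n + k) = ρ.vert k := by
  show (if n + k < n then _ else ρ.vert (n + k - n)) = ρ.vert k
  rw [if_neg (by omega)]
  congr 1
  omega

lemma Path.wsum_succ {G : MPGame V} (π : G.Path) (k : ℕ) :
    π.wsum (k + 1) = π.wsum k + G.w (π.vert k) (π.vert (k + 1)) :=
  Finset.sum_range_succ _ _

lemma Path.splice_wsum {G : MPGame V} (π ρ : G.Path) (n : ℕ) (h : ρ.vert 0 = π.vert n)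
    (k : ℕ) : (Path.splice π ρ n h).wsum (n + k) = π.wsum n + ρ.wsum k := by
  induction k with
  | zero =>
    have h0 : ρ.wsum 0 = 0 := by simp [Path.wsum]
    rw [Nat.add_zero, h0, add_zero]
    unfold Path.wsum
    refine Finset.sum_congr rfl fun i hi => ?_
    rw [Finset.mem_range] at hi
    rw [Path.splice_vert_le π ρ n h hi.le, Path.splice_vert_le π ρ n h (by omega)]
  | succ k ih =>
    have e1 : n + (k + 1) = (n + k) + 1 := rfl
    rw [e1, Path.wsum_succ, ih, Path.splice_vert_ge π ρ n h k,
      show n + k + 1 = n + (k + 1) from rfl, Path.splice_vert_ge π ρ n h (k + 1),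
      Path.wsum_succ, add_assoc]

lemma Path.splice_consMin {G : MPGame V} {σ : V → V} (π ρ : G.Path) (n : ℕ)
    (h : ρ.vert 0 = π.vert n) (hπ : π.ConsMin σ) (hρ : ρ.ConsMin σ) :
    (Path.splice π ρ n h).ConsMin σ := by
  intro t ht
  rcases le_or_gt (t + 1) n with h1 | h1
  · rw [Path.splice_vert_le π ρ n h h1, Path.splice_vert_le π ρ n h (by omega)] at *
    exact hπ t ht
  · have h2 : n ≤ t := by omega
    rw [show t = n + (t - n) from by omega, Path.splice_vert_ge] at ht ⊢
    rw [show n + (t - n) + 1 = n + (t - n + 1) from by omega, Path.splice_vert_ge]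
    exact hρ (t - n) ht

end Paths

section SupSigma

lemma le_supSigma {G : MPGame V} {X : Set V} (π : G.Path) (k : ℕ)
    (hk : ∀ i < k, π.vert i ∉ X) : ((π.wsum k : ℝ) : EReal) ≤ supSigma X π :=
  le_iSup (fun k : {k : ℕ // ∀ i < k, π.vert i ∉ X} => ((π.wsum k.1 : ℝ) : EReal)) ⟨k, hk⟩

lemma supSigma_le {G : MPGame V} {X : Set V} (π : G.Path) {c : EReal}
    (h : ∀ k, (∀ i < k, π.vert i ∉ X) → ((π.wsum k : ℝ) : EReal) ≤ c) :
    supSigma X π ≤ c :=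
  iSup_le fun k => h k.1 k.2

@[simp] lemma wsum_zero {G : MPGame V} (π : G.Path) : π.wsum 0 = 0 := by
  simp [Path.wsum]

lemma supSigma_nonneg {G : MPGame V} {X : Set V} (π : G.Path) : 0 ≤ supSigma X π := by
  have h := le_supSigma (X := X) π 0 (fun i hi => absurd hi (Nat.not_lt_zero i))
  simpa using h

end SupSigma

end MPGame

namespace MPGame

variable {V : Type*}

section Values

open scoped Classical

/-- A legal successor function following `σ` at Min vertices. -/
noncomputable def play (G : MPGame V) (σ : V → V) : V → V :=
  fun z => if G.IsMin z then σ z else Classical.choose (G.sinkless z)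

lemma play_legal (G : MPGame V) {σ : V → V} (hσ : G.Legal σ) : G.Legal (G.play σ) := by
  intro z
  unfold play
  split
  · exact hσ z
  · exact Classical.choose_spec (G.sinkless z)

lemma play_consMin (G : MPGame V) {σ : V → V} (hσ : G.Legal σ) (v : V) :
    (G.mkPath (G.play σ) (G.play_legal hσ) v).ConsMin σ := by
  intro i hi
  rw [mkPath_vert_succ G (G.play σ) (G.play_legal hσ) v i]
  simp only [play]
  rw [if_pos hi]

lemma supSigmaVal_nonneg (G : MPGame V) (X : Set V) (v : V) : 0 ≤ G.supSigmaVal X v := by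
  refine le_iInf fun σ => ?_
  refine le_iSup_of_le ⟨G.mkPath (G.play σ.1) (G.play_legal σ.2) v, rfl,
    G.play_consMin σ.2 v⟩ ?_
  exact supSigma_nonneg _

lemma cons_supSigma {G : MPGame V} {X : Set V} {u : V} (hu : u ∉ X) (ρ : G.Path)
    (h : G.E u (ρ.vert 0)) :
    ((G.w u (ρ.vert 0) : ℝ) : EReal) + supSigma X ρ ≤ supSigma X (Path.cons u ρ h) := by
  refine add_iSup_le_of fun k => ?_
  rw [← ecoe_add, ← Path.cons_wsum u ρ h k.1]
  refine le_supSigma _ (k.1 + 1) fun i hi => ?_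
  cases i with
  | zero => exact hu
  | succ t => exact k.2 t (by omega)

lemma bellman_max (G : MPGame V) {u u' : V} (hu : u ∉ G.Nset) (hmax : ¬ G.IsMin u)
    (he : G.E u u') :
    ((G.w u u' : ℝ) : EReal) + G.supSigmaVal G.Nset u' ≤ G.supSigmaVal G.Nset u := by
  refine le_iInf fun σ => ?_
  have h1 : G.supSigmaVal G.Nset u' ≤
      ⨆ ρ : {ρ : G.Path // ρ.vert 0 = u' ∧ ρ.ConsMin σ.1}, supSigma G.Nset ρ.1 :=
    iInf_le _ σ
  refine le_trans (add_le_add_right h1 _) (add_iSup_le_of fun ρ => ?_)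
  have h0 : G.E u (ρ.1.vert 0) := by rw [ρ.2.1]; exact he
  have e : G.w u u' = G.w u (ρ.1.vert 0) := by rw [ρ.2.1]
  refine le_trans ?_ (le_iSup_of_le ⟨Path.cons u ρ.1 h0, rfl, fun i hi => ?_⟩ le_rfl)
  · rw [e]
    exact cons_supSigma hu ρ.1 h0
  · cases i with
    | zero => exact absurd hi hmax
    | succ t => exact ρ.2.2 t hi

lemma bellman_min (G : MPGame V) [Fintype V] {u : V} (hu : u ∉ G.Nset) (hmin : G.IsMin u) :
    ∃ u', G.E u u' ∧ ((G.w u u' : ℝ) : EReal) + G.supSigmaVal G.Nset u'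
      ≤ G.supSigmaVal G.Nset u := by
  classical
  by_contra hcon
  push_neg at hcon
  set T : Finset V := Finset.univ.filter (fun u' => G.E u u') with hT
  have hTne : T.Nonempty := by
    obtain ⟨u', hu'⟩ := G.sinkless u
    exact ⟨u', by simp [hT, hu']⟩
  set M : EReal := T.inf' hTne (fun u' => ((G.w u u' : ℝ) : EReal) + G.supSigmaVal G.Nset u')
    with hM
  have hlt : G.supSigmaVal G.Nset u < M := by
    rw [hM, Finset.lt_inf'_iff]
    intro u' hu'
    exact hcon u' (by simpa [hT] using hu')
  have hge : M ≤ G.supSigmaVal G.Nset u := by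
    refine le_iInf fun σ => ?_
    have hσu : G.E u (σ.1 u) := σ.2 u
    have hMle : M ≤ ((G.w u (σ.1 u) : ℝ) : EReal) + G.supSigmaVal G.Nset (σ.1 u) :=
      Finset.inf'_le _ (by simp [hT, hσu])
    refine le_trans hMle ?_
    have h1 : G.supSigmaVal G.Nset (σ.1 u) ≤
        ⨆ ρ : {ρ : G.Path // ρ.vert 0 = σ.1 u ∧ ρ.ConsMin σ.1}, supSigma G.Nset ρ.1 :=
      iInf_le _ σ
    refine le_trans (add_le_add_right h1 _) (add_iSup_le_of fun ρ => ?_)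
    have h0 : G.E u (ρ.1.vert 0) := by rw [ρ.2.1]; exact hσu
    have e : G.w u (σ.1 u) = G.w u (ρ.1.vert 0) := by rw [ρ.2.1]
    refine le_trans ?_ (le_iSup_of_le ⟨Path.cons u ρ.1 h0, rfl, fun i hi => ?_⟩ le_rfl)
    · rw [e]
      exact cons_supSigma hu ρ.1 h0
    · cases i with
      | zero => exact ρ.2.1
      | succ t => exact ρ.2.2 t hi
  exact absurd (lt_of_le_of_lt hge hlt) (lt_irrefl _)

end Values

end MPGame

namespace MPGame

variable {V : Type*}

section Zones

lemma ZNr_mem {G : MPGame V} {D : Set V} {v : V} (h : G.ZNr D v) : v ∈ D := by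
  cases h <;> assumption

@[simp] lemma pot_w (G : MPGame V) (φ : V → ℤ) (a b : V) :
    (G.pot φ).w a b = G.w a b + φ b - φ a := rfl

lemma notNset_min {G : MPGame V} {u : V} (h : u ∉ G.Nset) (hmin : G.IsMin u) :
    ∀ u', G.E u u' → 0 ≤ G.w u u' := by
  intro u' he
  by_contra hw
  exact h ⟨Set.mem_univ u, Or.inl ⟨hmin, u', Set.mem_univ u', he, by omega⟩⟩

lemma notNset_max {G : MPGame V} {u : V} (h : u ∉ G.Nset) (hmax : ¬ G.IsMin u) :
    ∃ u', G.E u u' ∧ 0 ≤ G.w u u' := by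
  by_contra hcon
  push_neg at hcon
  exact h ⟨Set.mem_univ u, Or.inr ⟨hmax, fun u' _ he => by
    have := hcon u' he; omega⟩⟩

end Zones

section Segments

lemma wsum_Ico {G : MPGame V} (π : G.Path) {i j : ℕ} (hij : i ≤ j) :
    π.wsum j - π.wsum i = ∑ t ∈ Finset.Ico i j, G.w (π.vert t) (π.vert (t + 1)) := by
  unfold Path.wsum
  rw [Finset.sum_Ico_eq_sub _ hij]

lemma phi_Ico {G : MPGame V} (π : G.Path) (φ : V → ℤ) {i j : ℕ} (hij : i ≤ j) :
    ∑ t ∈ Finset.Ico i j, (φ (π.vert (t + 1)) - φ (π.vert t))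
      = φ (π.vert j) - φ (π.vert i) := by
  rw [Finset.sum_Ico_eq_sub _ hij, Finset.sum_range_sub (fun t => φ (π.vert t)),
    Finset.sum_range_sub (fun t => φ (π.vert t))]
  ring

lemma wsum_Ico_mod {G : MPGame V} (π : G.Path) (φ : V → ℤ) {i j : ℕ} (hij : i ≤ j) :
    ∑ t ∈ Finset.Ico i j,
        (G.w (π.vert t) (π.vert (t + 1)) + φ (π.vert (t + 1)) - φ (π.vert t))
      = (π.wsum j - π.wsum i) + (φ (π.vert j) - φ (π.vert i)) := by
  have h1 : ∀ t ∈ Finset.Ico i j,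
      (G.w (π.vert t) (π.vert (t + 1)) + φ (π.vert (t + 1)) - φ (π.vert t))
        = G.w (π.vert t) (π.vert (t + 1)) + (φ (π.vert (t + 1)) - φ (π.vert t)) :=
    fun t _ => by ring
  rw [Finset.sum_congr rfl h1, Finset.sum_add_distrib, phi_Ico π φ hij, ← wsum_Ico π hij]

lemma wsum_repeat_pos {G : MPGame V} (hz : G.NoZeroCycle) (π : G.Path) (φ : V → ℤ)
    {i j : ℕ} (hij : i < j) (hv : π.vert i = π.vert j)
    (hw : ∀ t, 0 ≤ G.w (π.vert t) (π.vert (t + 1)) + φ (π.vert (t + 1)) - φ (π.vert t)) :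
    π.wsum i + 1 ≤ π.wsum j := by
  have hne := hz π i j hij hv
  have h1 := wsum_Ico_mod π φ hij.le
  have h2 : (0 : ℤ) ≤ ∑ t ∈ Finset.Ico i j,
      (G.w (π.vert t) (π.vert (t + 1)) + φ (π.vert (t + 1)) - φ (π.vert t)) :=
    Finset.sum_nonneg fun t _ => hw t
  rw [h1] at h2
  have h3 : φ (π.vert i) = φ (π.vert j) := by rw [hv]
  omega

lemma wsum_repeat_contra {G : MPGame V} (hz : G.NoZeroCycle) (π : G.Path) (φ : V → ℤ)
    {i j : ℕ} (hij : i < j) (hv : π.vert i = π.vert j)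
    (hw1 : ∀ t, 0 ≤ G.w (π.vert t) (π.vert (t + 1)))
    (hw2 : ∀ t, G.w (π.vert t) (π.vert (t + 1)) + φ (π.vert (t + 1)) - φ (π.vert t) ≤ 0) :
    False := by
  have hne := hz π i j hij hv
  have h1 := wsum_Ico_mod π φ hij.le
  have h2 : (∑ t ∈ Finset.Ico i j,
      (G.w (π.vert t) (π.vert (t + 1)) + φ (π.vert (t + 1)) - φ (π.vert t))) ≤ 0 :=
    Finset.sum_nonpos fun t _ => hw2 t
  rw [h1] at h2
  have h3 : (0 : ℤ) ≤ ∑ t ∈ Finset.Ico i j, G.w (π.vert t) (π.vert (t + 1)) :=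
    Finset.sum_nonneg fun t _ => hw1 t
  rw [← wsum_Ico π hij.le] at h3
  have h4 : φ (π.vert i) = φ (π.vert j) := by rw [hv]
  omega

lemma exists_repeat {V : Type*} [Fintype V] (f : ℕ → V) : ∃ i j, i < j ∧ f i = f j := by
  obtain ⟨a, b, hab, hfab⟩ := Finite.exists_ne_map_eq_of_infinite f
  rcases hab.lt_or_gt with h | h
  · exact ⟨a, b, h, hfab⟩
  · exact ⟨b, a, h, hfab.symm⟩

lemma exists_unbounded_occ {V : Type*} [Fintype V] (f : ℕ → V) :
    ∃ u : V, ∀ n : ℕ, ∃ i, n ≤ i ∧ f i = u := by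
  by_contra hcon
  push_neg at hcon
  choose N hN using hcon
  exact hN (f (Finset.univ.sup N)) (Finset.univ.sup N)
    (Finset.le_sup (Finset.mem_univ _)) rfl

end Segments

end MPGame


open MPGame in
/-- extension of Lemma 3b, fixing many vertices at once:
with `F ⊇ N`, `g` the finite `supΣ^N`-values on `F`, `H = G ∖ F` a subgame
with reducing potential `φ_H`, `H⁺ = ZP_{φ_H}` empty and `H⁻ = ZN_{φ_H}`
nonempty, and `m` the maximum of `w(vv') + supΣ^N(v') − φ_H(v)` over edges
from `H⁻ ∩ V_Max` to `F` (such edges exist): if a vertex `v ∈ H⁻` is such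
that Max has a strategy ensuring, from `v`, that the play visits only edges
of `φ_H`-modified weight `≥ 0` while remaining in `H⁻` and either stays
forever in `H⁻` or exits via a good escape (an edge from `H⁻` to `F` of
value `≥ m`), then `supΣ^N(v) = m + φ_H(v)`. -/
theorem statement16 {V : Type*} [Fintype V] (G : MPGame V)
    (hz : G.NoZeroCycle)
    (F : Set V) (hNF : G.Nset ⊆ F)
    (g : V → ℤ) (hg : ∀ u ∈ F, G.supSigmaVal G.Nset u = ((g u : ℝ) : EReal))
    (hsub : ∀ u ∈ Fᶜ, ∃ u' ∈ Fᶜ, G.E u u')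
    (φH : V → ℤ) (hred : (G.pot φH).ReducedOn Fᶜ)
    (hplus : ∀ u, ¬ (G.pot φH).ZPr Fᶜ u)
    (hminus : ∃ u, (G.pot φH).ZNr Fᶜ u)
    (m : ℤ)
    (hmex : ∃ u u', (G.pot φH).ZNr Fᶜ u ∧ ¬ G.IsMin u ∧ G.E u u' ∧ u' ∈ F ∧
      G.w u u' + g u' - φH u = m)
    (hmub : ∀ u u', (G.pot φH).ZNr Fᶜ u → ¬ G.IsMin u → G.E u u' → u' ∈ F →
      G.w u u' + g u' - φH u ≤ m)
    (v : V) (hv : (G.pot φH).ZNr Fᶜ v)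
    (τ : V → V) (hτ : G.Legal τ)
    (hens : ∀ π : G.Path, π.vert 0 = v → π.ConsMax τ →
      ∀ i, (∀ j ≤ i, (G.pot φH).ZNr Fᶜ (π.vert j)) →
        (((G.pot φH).ZNr Fᶜ (π.vert (i + 1)) ∧
            0 ≤ G.w (π.vert i) (π.vert (i + 1)) +
              φH (π.vert (i + 1)) - φH (π.vert i)) ∨
         (π.vert (i + 1) ∈ F ∧
            m ≤ G.w (π.vert i) (π.vert (i + 1)) +
              g (π.vert (i + 1)) - φH (π.vert i)))) :
    G.supSigmaVal G.Nset v = ((m + φH v : ℝ) : EReal) := by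
  classical
  set val : V → EReal := G.supSigmaVal G.Nset with hval
  have hvalnn : ∀ z, 0 ≤ val z := fun z => G.supSigmaVal_nonneg _ z
  have hZN : ∀ {z : V}, (G.pot φH).ZNr Fᶜ z → z ∉ G.Nset := by
    intro z hzZ hN
    exact (ZNr_mem hzZ) (hNF hN)
  have hgnn : ∀ u ∈ F, 0 ≤ g u := by
    intro u hu
    have h1 := hg u hu
    have h2 := hvalnn u
    rw [h1] at h2
    exact_mod_cast h2
  -- (†): m + φH is nonnegative on H⁻
  have dagger : ∀ z, (G.pot φH).ZNr Fᶜ z → 0 ≤ m + φH z := by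
    by_contra hcon
    push_neg at hcon
    obtain ⟨z₀, hz₀, hz₀m⟩ := hcon
    have step : ∀ z, ((G.pot φH).ZNr Fᶜ z ∧ m + φH z < 0) →
        ∃ z', (((G.pot φH).ZNr Fᶜ z' ∧ m + φH z' < 0) ∧ G.E z z' ∧ 0 ≤ G.w z z' ∧
          G.w z z' + φH z' - φH z ≤ 0) := by
      rintro z ⟨hzZ, hzm⟩
      have hzN : z ∉ G.Nset := hZN hzZ
      by_cases hmin : G.IsMin z
      · obtain ⟨z', hz'F, he, hwle, hZ'⟩ := (hred.1 z hzZ).1 hmin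
        rw [pot_w] at hwle
        have hw0 : 0 ≤ G.w z z' := notNset_min hzN hmin z' he
        exact ⟨z', ⟨hZ', by omega⟩, he, hw0, hwle⟩
      · obtain ⟨z', he, hw0⟩ := notNset_max hzN hmin
        by_cases hz'F : z' ∈ F
        · exfalso
          have h1 := hmub z z' hzZ hmin he hz'F
          have h2 := hgnn z' hz'F
          omega
        · have h2 := (hred.1 z hzZ).2 hmin z' hz'F he
          rw [pot_w] at h2
          exact ⟨z', ⟨h2.2, by omega⟩, he, hw0, h2.1⟩
    choose nxt hnxt using step
    set f : V → V := fun z =>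
      if h : ((G.pot φH).ZNr Fᶜ z ∧ m + φH z < 0) then nxt z h
      else Classical.choose (G.sinkless z) with hf
    have hfl : ∀ z, G.E z (f z) := by
      intro z
      simp only [hf]
      split
      · exact (hnxt z ‹_›).2.1
      · exact Classical.choose_spec (G.sinkless z)
    set π := G.mkPath f hfl z₀ with hπ
    have hsucc : ∀ n, π.vert (n + 1) = f (π.vert n) := by
      intro n
      rw [hπ]
      exact mkPath_vert_succ G f hfl z₀ n
    have hinv : ∀ n, ((G.pot φH).ZNr Fᶜ (π.vert n) ∧ m + φH (π.vert n) < 0) := by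
      intro n
      induction n with
      | zero => exact ⟨hz₀, hz₀m⟩
      | succ n ih =>
        rw [hsucc n]
        simp only [hf]
        rw [dif_pos ih]
        exact (hnxt _ ih).1
    have hedge : ∀ n, 0 ≤ G.w (π.vert n) (π.vert (n + 1)) ∧
        G.w (π.vert n) (π.vert (n + 1)) + φH (π.vert (n + 1)) - φH (π.vert n) ≤ 0 := by
      intro n
      have hv1 : π.vert (n + 1) = nxt (π.vert n) (hinv n) := by
        rw [hsucc n]
        simp only [hf]
        rw [dif_pos (hinv n)]
      rw [hv1]
      exact ⟨(hnxt _ (hinv n)).2.2.1, (hnxt _ (hinv n)).2.2.2⟩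
    obtain ⟨i, j, hij, hvij⟩ := exists_repeat π.vert
    exact wsum_repeat_contra hz π φH hij hvij (fun t => (hedge t).1) (fun t => (hedge t).2)
  -- the invariant function Φ
  set Φ : V → EReal := fun z =>
    if (G.pot φH).ZNr Fᶜ z then min (val z) (((m + φH z : ℤ) : ℝ) : EReal) else val z
    with hΦdef
  have hΦZ : ∀ z, (G.pot φH).ZNr Fᶜ z →
      Φ z = min (val z) (((m + φH z : ℤ) : ℝ) : EReal) := by
    intro z hzZ
    simp only [hΦdef]
    rw [if_pos hzZ]
  have hΦnZ : ∀ z, ¬ (G.pot φH).ZNr Fᶜ z → Φ z = val z := by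
    intro z hzZ
    simp only [hΦdef]
    rw [if_neg hzZ]
  have hΦle_val : ∀ z, Φ z ≤ val z := by
    intro z
    by_cases hzZ : (G.pot φH).ZNr Fᶜ z
    · rw [hΦZ z hzZ]; exact min_le_left _ _
    · rw [hΦnZ z hzZ]
  have hΦleZ : ∀ z, (G.pot φH).ZNr Fᶜ z → Φ z ≤ (((m + φH z : ℤ) : ℝ) : EReal) := by
    intro z hzZ
    rw [hΦZ z hzZ]
    exact min_le_right _ _
  have hΦnn : ∀ z, 0 ≤ Φ z := by
    intro z
    by_cases hzZ : (G.pot φH).ZNr Fᶜ z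
    · rw [hΦZ z hzZ]
      refine le_min (hvalnn z) ?_
      exact_mod_cast dagger z hzZ
    · rw [hΦnZ z hzZ]
      exact hvalnn z
  -- key edge inequalities
  have keyMax : ∀ z z', z ∉ G.Nset → ¬ G.IsMin z → G.E z z' →
      ((G.w z z' : ℝ) : EReal) + Φ z' ≤ Φ z := by
    intro z z' hzN hmax he
    by_cases hzZ : (G.pot φH).ZNr Fᶜ z
    · rw [hΦZ z hzZ]
      refine le_min ?_ ?_
      · exact le_trans (add_le_add_right (hΦle_val z') _) (G.bellman_max hzN hmax he)
      · by_cases hz'F : z' ∈ F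
        · have h1 := hmub z z' hzZ hmax he hz'F
          have h2 : Φ z' = val z' := hΦnZ z' (fun hc => (ZNr_mem hc) hz'F)
          rw [h2, hg z' hz'F, ← ecoe_add]
          exact ecoe_le_ecoe (by omega)
        · have h2 := (hred.1 z hzZ).2 hmax z' hz'F he
          rw [pot_w] at h2
          refine le_trans (add_le_add_right (hΦleZ z' h2.2) _) ?_
          rw [← ecoe_add]
          exact ecoe_le_ecoe (by omega)
    · rw [hΦnZ z hzZ]
      exact le_trans (add_le_add_right (hΦle_val z') _) (G.bellman_max hzN hmax he)
  have selMin : ∀ z, z ∉ G.Nset → G.IsMin z →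
      ∃ z', G.E z z' ∧ ((G.w z z' : ℝ) : EReal) + Φ z' ≤ Φ z := by
    intro z hzN hmin
    by_cases hcase : (G.pot φH).ZNr Fᶜ z ∧ ¬ (val z ≤ (((m + φH z : ℤ) : ℝ) : EReal))
    · obtain ⟨hzZ, hlt⟩ := hcase
      obtain ⟨z', hz'F, he, hwle, hZ'⟩ := (hred.1 z hzZ).1 hmin
      rw [pot_w] at hwle
      refine ⟨z', he, ?_⟩
      have h1 : ((G.w z z' : ℝ) : EReal) + Φ z' ≤ (((m + φH z : ℤ) : ℝ) : EReal) := by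
        refine le_trans (add_le_add_right (hΦleZ z' hZ') _) ?_
        rw [← ecoe_add]
        exact ecoe_le_ecoe (by omega)
      rw [hΦZ z hzZ]
      exact le_min (le_trans h1 (le_of_not_ge hlt)) h1
    · obtain ⟨z', he, hb⟩ := G.bellman_min hzN hmin
      refine ⟨z', he, ?_⟩
      have hΦz : val z ≤ Φ z := by
        by_cases hzZ : (G.pot φH).ZNr Fᶜ z
        · rw [hΦZ z hzZ]
          refine le_min le_rfl ?_
          rcases not_and_or.mp hcase with h | h
          · exact absurd hzZ h
          · exact not_not.mp h
        · rw [hΦnZ z hzZ]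
      exact le_trans (add_le_add_right (hΦle_val z') _) (le_trans hb hΦz)
  -- Min's strategy
  have hsel : ∀ z, ∃ z', G.E z z' ∧ (z ∉ G.Nset → G.IsMin z →
      ((G.w z z' : ℝ) : EReal) + Φ z' ≤ Φ z) := by
    intro z
    by_cases h1 : z ∉ G.Nset ∧ G.IsMin z
    · obtain ⟨z', he, hb⟩ := selMin z h1.1 h1.2
      exact ⟨z', he, fun _ _ => hb⟩
    · obtain ⟨z', he⟩ := G.sinkless z
      exact ⟨z', he, fun hN hm => absurd ⟨hN, hm⟩ h1⟩
  choose σh hσhE hσhB using hsel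
  have inv : ∀ (π : G.Path), π.ConsMin σh → ∀ k, (∀ i < k, π.vert i ∉ G.Nset) →
      ((π.wsum k : ℝ) : EReal) + Φ (π.vert k) ≤ Φ (π.vert 0) := by
    intro π hπ k
    induction k with
    | zero =>
      intro _
      simp
    | succ k ih =>
      intro hadm
      have hkN : π.vert k ∉ G.Nset := hadm k (by omega)
      have hstep : ((G.w (π.vert k) (π.vert (k + 1)) : ℝ) : EReal) + Φ (π.vert (k + 1))
          ≤ Φ (π.vert k) := by
        by_cases hmin : G.IsMin (π.vert k)
        · have h1 := hπ k hmin
          rw [h1]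
          exact hσhB (π.vert k) hkN hmin
        · exact keyMax _ _ hkN hmin (π.adj k)
      calc ((π.wsum (k + 1) : ℝ) : EReal) + Φ (π.vert (k + 1))
          = ((π.wsum k : ℝ) : EReal) +
            (((G.w (π.vert k) (π.vert (k + 1)) : ℝ) : EReal) + Φ (π.vert (k + 1))) := by
            rw [Path.wsum_succ, ecoe_add, add_assoc]
        _ ≤ ((π.wsum k : ℝ) : EReal) + Φ (π.vert k) := add_le_add_right hstep _
        _ ≤ Φ (π.vert 0) := ih (fun i hi => hadm i (by omega))
  -- upper bound
  have upper : val v ≤ (((m + φH v : ℤ) : ℝ) : EReal) := by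
    have h1 : val v ≤ ⨆ π : {π : G.Path // π.vert 0 = v ∧ π.ConsMin σh},
        supSigma G.Nset π.1 :=
      iInf_le (fun σ : {σ : V → V // G.Legal σ} =>
        ⨆ π : {π : G.Path // π.vert 0 = v ∧ π.ConsMin σ.1}, supSigma G.Nset π.1)
        ⟨σh, hσhE⟩
    refine le_trans h1 (le_trans (iSup_le fun π => ?_) (hΦleZ v hv))
    refine supSigma_le π.1 fun k hk => ?_
    have h2 := inv π.1 π.2.2 k hk
    rw [π.2.1] at h2
    refine le_trans ?_ h2
    conv_lhs => rw [← add_zero ((π.1.wsum k : ℝ) : EReal)]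
    exact add_le_add_right (hΦnn _) _
  -- lower bound
  have lower : (((m + φH v : ℤ) : ℝ) : EReal) ≤ val v := by
    refine le_iInf fun σ => ?_
    set f0 : V → V := fun z => if G.IsMin z then σ.1 z else τ z with hf0
    have hf0l : ∀ z, G.E z (f0 z) := by
      intro z
      simp only [hf0]
      split
      · exact σ.2 z
      · exact hτ z
    set π0 : G.Path := G.mkPath f0 hf0l v with hπ0
    have hπ0v : π0.vert 0 = v := rfl
    have hπ0succ : ∀ n, π0.vert (n + 1) = f0 (π0.vert n) := by
      intro n
      rw [hπ0]
      exact mkPath_vert_succ G f0 hf0l v n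
    have hπ0min : π0.ConsMin σ.1 := by
      intro i hi
      rw [hπ0succ i]
      simp only [hf0]
      rw [if_pos hi]
    have hπ0max : π0.ConsMax τ := by
      intro i hi
      rw [hπ0succ i]
      simp only [hf0]
      rw [if_neg hi]
    have hens0 := hens π0 hπ0v hπ0max
    by_cases hall : ∀ n, (G.pot φH).ZNr Fᶜ (π0.vert n)
    · -- stays in H⁻ forever: partial sums unbounded
      have hwφ : ∀ i, 0 ≤ G.w (π0.vert i) (π0.vert (i + 1)) +
          φH (π0.vert (i + 1)) - φH (π0.vert i) := by
        intro i
        rcases hens0 i (fun j _ => hall j) with h | h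
        · exact h.2
        · exact absurd h.1 (ZNr_mem (hall (i + 1)))
      have hnotN : ∀ i, π0.vert i ∉ G.Nset := fun i => hZN (hall i)
      obtain ⟨u, hu⟩ := exists_unbounded_occ π0.vert
      obtain ⟨i0, _, hi0⟩ := hu 0
      have grow : ∀ n : ℕ, ∃ i, π0.vert i = u ∧ π0.wsum i0 + n ≤ π0.wsum i := by
        intro n
        induction n with
        | zero => exact ⟨i0, hi0, by omega⟩
        | succ n ih =>
          obtain ⟨i, hiu, hiw⟩ := ih
          obtain ⟨j, hij, hju⟩ := hu (i + 1)
          have h1 : π0.wsum i + 1 ≤ π0.wsum j :=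
            wsum_repeat_pos hz π0 φH (by omega) (hiu.trans hju.symm) hwφ
          exact ⟨j, hju, by omega⟩
      obtain ⟨i, _, hiw⟩ := grow (m + φH v - π0.wsum i0).toNat
      refine le_iSup_of_le ⟨π0, hπ0v, hπ0min⟩
        (le_trans ?_ (le_supSigma π0 i (fun t _ => hnotN t)))
      exact ecoe_le_ecoe (by omega)
    · -- exits to F via a good escape
      have hex : ∃ n, ¬ (G.pot φH).ZNr Fᶜ (π0.vert n) := by
        push_neg at hall
        exact hall
      have hnspec := Nat.find_spec hex
      have hnmin : ∀ t < Nat.find hex, (G.pot φH).ZNr Fᶜ (π0.vert t) :=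
        fun t ht => not_not.mp (Nat.find_min hex ht)
      have hn0 : Nat.find hex ≠ 0 := by
        intro h
        rw [h, hπ0v] at hnspec
        exact hnspec hv
      obtain ⟨i, hieq⟩ : ∃ i, Nat.find hex = i + 1 := ⟨Nat.find hex - 1, by omega⟩
      have hQi : ∀ j ≤ i, (G.pot φH).ZNr Fᶜ (π0.vert j) := fun j hj =>
        hnmin j (by omega)
      rw [hieq] at hnspec
      have hexit : π0.vert (i + 1) ∈ F ∧
          m ≤ G.w (π0.vert i) (π0.vert (i + 1)) + g (π0.vert (i + 1)) - φH (π0.vert i) := by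
        rcases hens0 i hQi with h | h
        · exact absurd h.1 hnspec
        · exact h
      have hwφ : ∀ j, j < i → 0 ≤ G.w (π0.vert j) (π0.vert (j + 1)) +
          φH (π0.vert (j + 1)) - φH (π0.vert j) := by
        intro j hj
        rcases hens0 j (fun t ht => hQi t (by omega)) with h | h
        · exact h.2
        · exact absurd h.1 (ZNr_mem (hQi (j + 1) (by omega)))
      have hsum : φH v - φH (π0.vert i) ≤ π0.wsum i := by
        have h1 := wsum_Ico_mod π0 φH (Nat.zero_le i)
        have h2 : (0 : ℤ) ≤ ∑ t ∈ Finset.Ico 0 i,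
            (G.w (π0.vert t) (π0.vert (t + 1)) + φH (π0.vert (t + 1)) - φH (π0.vert t)) :=
          Finset.sum_nonneg fun t ht => hwφ t (Finset.mem_Ico.mp ht).2
        rw [h1] at h2
        have h3 : π0.wsum 0 = 0 := wsum_zero π0
        rw [hπ0v] at h2
        omega
      have hckey : m + φH v ≤ π0.wsum (i + 1) + g (π0.vert (i + 1)) := by
        have h2 := hexit.2
        have h3 := Path.wsum_succ π0 i
        omega
      have hval' : val (π0.vert (i + 1)) ≤
          ⨆ ρ : {ρ : G.Path // ρ.vert 0 = π0.vert (i + 1) ∧ ρ.ConsMin σ.1},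
            supSigma G.Nset ρ.1 :=
        iInf_le (fun σ' : {σ' : V → V // G.Legal σ'} =>
          ⨆ ρ : {ρ : G.Path // ρ.vert 0 = π0.vert (i + 1) ∧ ρ.ConsMin σ'.1},
            supSigma G.Nset ρ.1) σ
      have hgu : (((g (π0.vert (i + 1)) : ℤ) : ℝ) : EReal) = val (π0.vert (i + 1)) :=
        (hg _ hexit.1).symm
      refine le_trans (ecoe_le_ecoe hckey) ?_
      rw [ecoe_add]
      refine le_trans (add_le_add_right (le_trans (le_of_eq hgu) hval') _) ?_
      refine add_iSup_le_of fun ρ => ?_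
      have hρ0 : ρ.1.vert 0 = π0.vert (i + 1) := ρ.2.1
      have hπ'0 : (Path.splice π0 ρ.1 (i + 1) hρ0).vert 0 = v := by
        rw [Path.splice_vert_le π0 ρ.1 (i + 1) hρ0 (by omega)]
        exact hπ0v
      have hπ'c : (Path.splice π0 ρ.1 (i + 1) hρ0).ConsMin σ.1 :=
        Path.splice_consMin _ _ _ _ hπ0min ρ.2.2
      refine le_trans ?_ (le_iSup_of_le ⟨Path.splice π0 ρ.1 (i + 1) hρ0, hπ'0, hπ'c⟩ le_rfl)
      refine add_iSup_le_of fun k => ?_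
      rw [← ecoe_add, ← Path.splice_wsum π0 ρ.1 (i + 1) hρ0 k.1]
      refine le_supSigma _ ((i + 1) + k.1) fun t ht => ?_
      rcases lt_or_ge t (i + 1) with h | h
      · rw [Path.splice_vert_le π0 ρ.1 (i + 1) hρ0 h.le]
        exact hZN (hQi t (by omega))
      · obtain ⟨s, rfl⟩ : ∃ s, t = (i + 1) + s := ⟨t - (i + 1), by omega⟩
        rw [Path.splice_vert_ge π0 ρ.1 (i + 1) hρ0 s]
        exact k.2 s (by omega)
  have hgoal : ((m + φH v : ℝ) : EReal) = (((m + φH v : ℤ) : ℝ) : EReal) := by norm_cast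
  rw [hgoal]
  exact le_antisymm upper lower
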